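/- Let R be a ring with a central element c, an element s, and sequences x : ℤ → R and F : ℕ → R with F 0 = 1, F 1 = s, F 2 = s*s - 2c, F (n+1) = F n * s - c * F (n-1) for n ≥ 2. Assume the exchange relations s * x (-m) = x (-(m+1)) + c * x (-(m-1)) hold for all m ≥ 1, together with the base cases F 1 * x (-n) = x (-(n+1)) + c * x (-(n-1)) for n ≥ 1. Then for all 1 ≤ m ≤ n: F m * x (-n) = x (-(n+m)) + c^m * x (-(n-m)). -/
import Mathlib


/-- First branch of Theorem 3.12(1): F m x_{-n} = x_{-(n+m)} + c^m x_{-(n-m)}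
for 1 ≤ m ≤ n. -/
theorem Fm_times_negative_cluster_variable
    (R : Type*) [Ring R] (c s : R)
    (hc : ∀ r : R, c * r = r * c)
    (x : ℤ → R)
    (F : ℕ → R) (hF0 : F 0 = 1) (hF1 : F 1 = s)
    (hF2 : F 2 = s * s - 2 * c)
    (hFrec : ∀ n : ℕ, 2 ≤ n → F (n + 1) = F n * s - c * F (n - 1))
    (hexch : ∀ m : ℤ, 1 ≤ m → s * x (-m) = x (-(m + 1)) + c * x (-(m - 1)))
    (hbase : ∀ n : ℤ, 1 ≤ n → F 1 * x (-n) = x (-(n + 1)) + c * x (-(n - 1))) :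
    ∀ m n : ℕ, 1 ≤ m → m ≤ n →
      F m * x (-(n : ℤ)) = x (-((n : ℤ) + (m : ℤ))) + c ^ m * x (-((n : ℤ) - (m : ℤ))) := by
  have case1 : ∀ n : ℤ, 1 ≤ n →
      F 1 * x (-n) = x (-(n + 1)) + c ^ 1 * x (-(n - 1)) := by
    intro n hn; simpa using hbase n hn
  have case2 : ∀ n : ℤ, 2 ≤ n →
      F 2 * x (-n) = x (-(n + 2)) + c ^ 2 * x (-(n - 2)) := by
    intro n hn2
    have e1 : s * x (-n) = x (-(n + 1)) + c * x (-(n - 1)) := hexch n (by omega)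
    have e2 : s * x (-(n + 1)) = x (-(n + 2)) + c * x (-n) := by
      have h := hexch (n + 1) (by omega)
      rw [show n + 1 + 1 = n + 2 by ring, show n + 1 - 1 = n by ring] at h
      exact h
    have e3 : s * x (-(n - 1)) = x (-n) + c * x (-(n - 2)) := by
      have h := hexch (n - 1) (by omega)
      rw [show n - 1 + 1 = n by ring, show n - 1 - 1 = n - 2 by ring] at h
      exact h
    calc F 2 * x (-n) = s * (s * x (-n)) - 2 * (c * x (-n)) := by
          rw [hF2]; noncomm_ring
      _ = s * x (-(n + 1)) + c * (s * x (-(n - 1))) - 2 * (c * x (-n)) := by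
          rw [e1, mul_add, ← mul_assoc, ← hc s, mul_assoc]
      _ = (x (-(n + 2)) + c * x (-n)) + c * (x (-n) + c * x (-(n - 2)))
            - 2 * (c * x (-n)) := by rw [e2, e3]
      _ = x (-(n + 2)) + c ^ 2 * x (-(n - 2)) := by noncomm_ring
  have key : ∀ m : ℕ, 1 ≤ m → ∀ n : ℤ, (m : ℤ) ≤ n →
      F m * x (-n) = x (-(n + (m : ℤ))) + c ^ m * x (-(n - (m : ℤ))) := by
    intro m
    induction m using Nat.strong_induction_on with
    | _ m ih =>
      intro hm n hn
      match m, hm, ih with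
      | 1, _, _ =>
        simpa using case1 n (by exact_mod_cast hn)
      | 2, _, _ =>
        simpa using case2 n (by exact_mod_cast hn)
      | (k+1), _, ih =>
        by_cases hk2 : 2 ≤ k
        case neg =>
          -- k = 0 or 1, i.e. m = 1 or 2: already handled above unless k+1 = 2
          interval_cases k
          · simpa using case1 n (by exact_mod_cast hn)
          · simpa using case2 n (by exact_mod_cast hn)
        case pos =>
          have hk1 : 1 ≤ k := by omega
          have hkn : (k : ℤ) + 1 ≤ n := by exact_mod_cast hn
          have IH1 := ih k (by omega) hk1
          have IH2 := ih (k-1) (by omega) (by omega)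
          have castk : ((k - 1 : ℕ) : ℤ) = (k : ℤ) - 1 := by
            have : 1 ≤ k := hk1; push_cast [this]; ring
          have e1 : s * x (-n) = x (-(n + 1)) + c * x (-(n - 1)) := hexch n (by omega)
          have A : F k * x (-(n + 1))
              = x (-(n + 1 + (k:ℤ))) + c ^ k * x (-(n + 1 - (k:ℤ))) :=
            IH1 (n + 1) (by omega)
          have B : F k * x (-(n - 1))
              = x (-(n - 1 + (k:ℤ))) + c ^ k * x (-(n - 1 - (k:ℤ))) :=
            IH1 (n - 1) (by omega)
          have C : F (k - 1) * x (-n)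
              = x (-(n + ((k:ℤ) - 1))) + c ^ (k-1) * x (-(n - ((k:ℤ) - 1))) := by
            have h := IH2 n (by rw [castk]; omega)
            rw [castk] at h; exact h
          have hrec := hFrec k hk2
          have hck : c * c ^ (k - 1) = c ^ k := by
            rw [← pow_succ']
            congr 1
            omega
          calc F (k+1) * x (-n)
              = F k * (s * x (-n)) - c * (F (k-1) * x (-n)) := by
                rw [hrec]; noncomm_ring
            _ = F k * x (-(n + 1)) + F k * (c * x (-(n - 1)))
                - c * (F (k-1) * x (-n)) := by rw [e1, mul_add]
            _ = F k * x (-(n + 1)) + c * (F k * x (-(n - 1)))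
                - c * (F (k-1) * x (-n)) := by
                rw [← mul_assoc, ← hc (F k), mul_assoc]
            _ = (x (-(n + 1 + (k:ℤ))) + c ^ k * x (-(n + 1 - (k:ℤ))))
                + c * (x (-(n - 1 + (k:ℤ))) + c ^ k * x (-(n - 1 - (k:ℤ))))
                - c * (x (-(n + ((k:ℤ) - 1))) + c ^ (k-1) * x (-(n - ((k:ℤ) - 1)))) := by
                rw [A, B, C]
            _ = x (-(n + ((k:ℤ)+1))) + c ^ (k+1) * x (-(n - ((k:ℤ)+1))) := by
                rw [show n + 1 + (k:ℤ) = n + ((k:ℤ)+1) by ring,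
                  show n - 1 - (k:ℤ) = n - ((k:ℤ)+1) by ring,
                  show n + 1 - (k:ℤ) = n - ((k:ℤ)-1) by ring,
                  show n - 1 + (k:ℤ) = n + ((k:ℤ)-1) by ring]
                rw [mul_add, mul_add, ← mul_assoc c (c ^ (k-1)), hck,
                  ← mul_assoc c (c ^ k)]
                rw [show c * c ^ k = c ^ (k+1) by rw [← pow_succ']]
                abel
            _ = x (-(n + ((k+1 : ℕ):ℤ))) + c ^ (k+1) * x (-(n - ((k+1 : ℕ):ℤ))) := by
                push_cast; ring_nf
  intro m n hm hmn
  have := key m hm n (by exact_mod_cast hmn)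
  simpa using this
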